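/- For every odd integer a coprime to n (n ≥ 2), one has a^{δ(n)} ≡ 1 (Modd n), i.e. a_n(a^{φ(2n)/2}) = 1, where a_n is the Modd n reduction. (Analogue of the Fermat–Euler theorem for the multiplicative group Modd n.) -/

import Mathlib

/-- The Modd n reduction: a_n(k) = k mod n if ⌊k/n⌋ is even, (-k) mod n if ⌊k/n⌋ is odd. -/
def modd (n : ℕ) (k : ℤ) : ℤ :=
  if Even (k / (n : ℤ)) then k % (n : ℤ) else (-k) % (n : ℤ)

/-- Fermat–Euler analogue for Modd n: for odd a coprime to n (n ≥ 2),
a^{δ(n)} ≡ 1 (Modd n) where δ(n) = φ(2n)/2. -/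
theorem modd_fermat_euler (n : ℕ) (hn : 2 ≤ n) (a : ℤ) (ha : Odd a)
    (hcop : Int.gcd a (n : ℤ) = 1) :
    modd n (a ^ (Nat.totient (2 * n) / 2)) = 1 := by
  haveI : NeZero (2 * n) := ⟨by omega⟩
  set m := Nat.totient (2 * n) / 2 with hm
  have hcop2 : Int.gcd a ((2 * n : ℕ) : ℤ) = 1 := by
    have h2 : Nat.Coprime a.natAbs 2 := Nat.coprime_two_right.mpr (Int.natAbs_odd.mpr ha)
    have hn' : Nat.Coprime a.natAbs n := hcop
    exact Nat.Coprime.mul_right h2 hn'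
  have hun : IsUnit ((a : ZMod (2 * n))) := by
    have h1 : IsCoprime a (((2 * n : ℕ) : ℤ)) := Int.isCoprime_iff_gcd_eq_one.mpr hcop2
    have h2 := h1.map (Int.castRingHom (ZMod (2 * n)))
    simp only [map_intCast, Int.cast_natCast, ZMod.natCast_self, Int.coe_castRingHom] at h2
    exact isCoprime_zero_right.mp h2
  obtain ⟨u, hu⟩ := hun
  have hne : (-1 : (ZMod (2 * n))ˣ) ≠ 1 := by
    intro h
    have h1 : ((-1 : (ZMod (2 * n))ˣ) : ZMod (2 * n)) = ((1 : (ZMod (2 * n))ˣ) : ZMod (2 * n)) := by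
      rw [h]
    rw [Units.val_neg, Units.val_one] at h1
    have h2 : ((2 : ℕ) : ZMod (2 * n)) = 0 := by
      push_cast
      linear_combination -h1
    rw [ZMod.natCast_eq_zero_iff] at h2
    have := Nat.le_of_dvd (by norm_num) h2
    omega
  have hord : orderOf (-1 : (ZMod (2 * n))ˣ) = 2 := by
    apply orderOf_eq_prime
    · simp
    · exact hne
  set H : Subgroup (ZMod (2 * n))ˣ := Subgroup.zpowers (-1 : (ZMod (2 * n))ˣ) with hH
  have hcardH : Nat.card H = 2 := by rw [hH, Nat.card_zpowers, hord]
  have hcardG : Nat.card (ZMod (2 * n))ˣ = Nat.totient (2 * n) := by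
    rw [Nat.card_eq_fintype_card]
    exact ZMod.card_units_eq_totient (2 * n)
  have hlag := Subgroup.card_eq_card_quotient_mul_card_subgroup H
  rw [hcardG, hcardH] at hlag
  have hquot : Nat.card ((ZMod (2 * n))ˣ ⧸ H) = m := by omega
  have hp : ((QuotientGroup.mk u : (ZMod (2 * n))ˣ ⧸ H)) ^ m = 1 := by
    rw [← hquot]; exact pow_card_eq_one'
  have hmem : u ^ m ∈ H := by
    rw [← QuotientGroup.eq_one_iff]
    push_cast at hp ⊢
    exact hp
  obtain ⟨k, hk0⟩ := hmem
  have hk : (-1 : (ZMod (2 * n))ˣ) ^ k = u ^ m := hk0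
  have hsq : ((-1 : (ZMod (2 * n))ˣ)) ^ (2 : ℤ) = 1 := by
    rw [zpow_two]; simp
  have hpm : u ^ m = 1 ∨ u ^ m = -1 := by
    rcases Int.even_or_odd k with ⟨j, hj⟩ | ⟨j, hj⟩
    · left
      rw [← hk, hj, ← two_mul, zpow_mul, hsq, one_zpow]
    · right
      rw [← hk, hj, zpow_add, zpow_one, zpow_mul, hsq, one_zpow, one_mul]
  have hz : ((a ^ m : ℤ) : ZMod (2 * n)) = 1 ∨ ((a ^ m : ℤ) : ZMod (2 * n)) = -1 := by
    have hc : ((a ^ m : ℤ) : ZMod (2 * n)) = ((u : ZMod (2 * n))) ^ m := by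
      rw [hu]; push_cast; ring
    rcases hpm with h | h
    · left; rw [hc, ← Units.val_pow_eq_pow_val, h, Units.val_one]
    · right; rw [hc, ← Units.val_pow_eq_pow_val, h, Units.val_neg, Units.val_one]
  have hdvd : ((2 * n : ℕ) : ℤ) ∣ a ^ m - 1 ∨ ((2 * n : ℕ) : ℤ) ∣ a ^ m + 1 := by
    rcases hz with h | h
    · left
      rw [← ZMod.intCast_zmod_eq_zero_iff_dvd]
      push_cast at h ⊢
      rw [h]; ring
    · right
      rw [← ZMod.intCast_zmod_eq_zero_iff_dvd]
      push_cast at h ⊢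
      rw [h]; ring
  set N : ℤ := (n : ℤ) with hN
  have hN2 : 2 ≤ N := by omega
  set K : ℤ := a ^ m with hK
  rcases hdvd with ⟨q, hq⟩ | ⟨q, hq⟩
  · have hKe : K = 1 + 2 * q * N := by push_cast at hq; linarith
    have hdiv : K / N = 2 * q := by
      rw [hKe, Int.add_mul_ediv_right _ _ (by omega : N ≠ 0),
        Int.ediv_eq_zero_of_lt (by norm_num) (by omega)]
      ring
    have heven : Even (K / N) := by rw [hdiv]; exact even_two_mul q
    rw [modd, if_pos heven, hKe, Int.add_mul_emod_self_right,
      Int.emod_eq_of_lt (by norm_num) (by omega)]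
  · have hKe : K = (N - 1) + (2 * q - 1) * N := by push_cast at hq; linarith
    have hdiv : K / N = 2 * q - 1 := by
      rw [hKe, Int.add_mul_ediv_right _ _ (by omega : N ≠ 0),
        Int.ediv_eq_zero_of_lt (by omega) (by omega)]
      ring
    have hodd : ¬ Even (K / N) := by
      rw [hdiv]; rintro ⟨r, hr⟩; omega
    have hnegK : -K = 1 + (-2 * q) * N := by push_cast at hq; linarith
    rw [modd, if_neg hodd, hnegK, Int.add_mul_emod_self_right,
      Int.emod_eq_of_lt (by norm_num) (by omega)]
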